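/- Let H be a connected hypergraph of order n ≥ 2 with signless Laplacian Q(H). Then q_min(H) ≤ 2·sqrt(Z₁(H)/n), where Z₁(H) = Σ_{i∈V} d_i² is the first Zagreb index. -/

import Mathlib

open Finset

/-- The set of hyperedges containing both `i` and `j`. -/
def edgesBetween {n : ℕ} (E : Finset (Finset (Fin n))) (i j : Fin n) :
    Finset (Finset (Fin n)) :=
  E.filter fun e => i ∈ e ∧ j ∈ e

/-- The degree of vertex `i`: the number of hyperedges containing `i`. -/
def hdeg {n : ℕ} (E : Finset (Finset (Fin n))) (i : Fin n) : ℕ :=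
  (E.filter fun e => i ∈ e).card

/-- Two (distinct) vertices are adjacent if some hyperedge contains both. -/
def Adj {n : ℕ} (E : Finset (Finset (Fin n))) (i j : Fin n) : Prop :=
  i ≠ j ∧ ∃ e ∈ E, i ∈ e ∧ j ∈ e

/-- The neighbours of a vertex. -/
noncomputable def neighbors {n : ℕ} (E : Finset (Finset (Fin n))) (i : Fin n) :
    Finset (Fin n) :=
  @Finset.filter _ (fun j => Adj E i j) (Classical.decPred _) Finset.univ

/-- Banerjee's adjacency matrix of a hypergraph: `A i j = ∑_{e ∋ i,j} 1/(|e|-1)`. -/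
noncomputable def adjMat {n : ℕ} (E : Finset (Finset (Fin n))) :
    Matrix (Fin n) (Fin n) ℝ :=
  Matrix.of fun i j =>
    if i = j then 0 else ∑ e ∈ edgesBetween E i j, 1 / ((e.card : ℝ) - 1)

/-- The signless Laplacian matrix `Q = D + A`. -/
noncomputable def signlessLap {n : ℕ} (E : Finset (Finset (Fin n))) :
    Matrix (Fin n) (Fin n) ℝ :=
  Matrix.diagonal (fun i => (hdeg E i : ℝ)) + adjMat E

/-- Largest eigenvalue of a real matrix. -/
noncomputable def qmax {n : ℕ} (M : Matrix (Fin n) (Fin n) ℝ) : ℝ :=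
  sSup (spectrum ℝ M)

/-- Smallest eigenvalue of a real matrix. -/
noncomputable def qmin {n : ℕ} (M : Matrix (Fin n) (Fin n) ℝ) : ℝ :=
  sInf (spectrum ℝ M)

/-- A hypergraph is `k`-uniform if every hyperedge has exactly `k` vertices. -/
def IsUniform {n : ℕ} (k : ℕ) (E : Finset (Finset (Fin n))) : Prop :=
  ∀ e ∈ E, e.card = k

/-- A hypergraph is connected if any two vertices are joined by a walk. -/
def Conn {n : ℕ} (E : Finset (Finset (Fin n))) : Prop :=
  ∀ i j : Fin n, Relation.ReflTransGen (Adj E) i j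

lemma signlessLap_isHermitian {n : ℕ} (E : Finset (Finset (Fin n))) :
    (signlessLap E).IsHermitian := by
  rw [Matrix.IsHermitian]
  ext i j
  simp only [Matrix.conjTranspose_apply, signlessLap, Matrix.add_apply, adjMat,
    Matrix.diagonal_apply, Matrix.of_apply, star_trivial]
  have h1 : edgesBetween E j i = edgesBetween E i j := by
    unfold edgesBetween
    apply Finset.filter_congr
    intro e _
    simp [and_comm]
  by_cases h : i = j
  · subst h; simp
  · rw [if_neg h, if_neg (Ne.symm h), if_neg h, if_neg (Ne.symm h), h1]

lemma trace_signlessLap {n : ℕ} (E : Finset (Finset (Fin n))) :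
    (signlessLap E).trace = ∑ i : Fin n, (hdeg E i : ℝ) := by
  simp [Matrix.trace, signlessLap, Matrix.diag, adjMat]

lemma sum_eigenvalues_eq {n : ℕ} {M : Matrix (Fin n) (Fin n) ℝ}
    (hM : M.IsHermitian) : ∑ i, hM.eigenvalues i = M.trace := by
  simp [hM.trace_eq_sum_eigenvalues]

theorem stmt_12 (n : ℕ) (hn : 2 ≤ n) (E : Finset (Finset (Fin n)))
    (hc : Conn E) :
    qmin (signlessLap E) ≤
      2 * Real.sqrt ((∑ i : Fin n, (hdeg E i : ℝ) ^ 2) / n) := by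
  have hn0 : (0:ℝ) < n := by positivity
  have hM := signlessLap_isHermitian E
  have hspec := Matrix.IsHermitian.spectrum_real_eq_range_eigenvalues hM
  -- the minimum eigenvalue
  haveI : Nonempty (Fin n) := ⟨⟨0, by omega⟩⟩
  have hne : (Finset.univ : Finset (Fin n)).Nonempty := Finset.univ_nonempty
  obtain ⟨i0, _, hi0⟩ := Finset.exists_min_image Finset.univ hM.eigenvalues hne
  have hqmin : qmin (signlessLap E) ≤ hM.eigenvalues i0 := by
    apply csInf_le
    · rw [hspec]
      exact (Set.finite_range _).bddBelow
    · exact hM.eigenvalues_mem_spectrum_real i0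
  -- min eigenvalue ≤ average = trace / n
  have havg : hM.eigenvalues i0 ≤ (∑ i : Fin n, (hdeg E i : ℝ)) / n := by
    rw [← trace_signlessLap E, ← sum_eigenvalues_eq hM, le_div_iff₀ hn0]
    calc hM.eigenvalues i0 * n = ∑ _i : Fin n, hM.eigenvalues i0 := by
          simp [mul_comm]
      _ ≤ ∑ i, hM.eigenvalues i :=
          Finset.sum_le_sum fun i _ => hi0 i (Finset.mem_univ i)
  -- Cauchy-Schwarz step
  have hS : (0:ℝ) ≤ ∑ i : Fin n, (hdeg E i : ℝ) :=
    Finset.sum_nonneg fun i _ => Nat.cast_nonneg _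
  have hCS : (∑ i : Fin n, (hdeg E i : ℝ)) ^ 2 ≤
      n * ∑ i : Fin n, (hdeg E i : ℝ) ^ 2 := by
    have := sq_sum_le_card_mul_sum_sq (s := (Finset.univ : Finset (Fin n)))
      (f := fun i => (hdeg E i : ℝ))
    simpa using this
  have hfin : (∑ i : Fin n, (hdeg E i : ℝ)) / n ≤
      Real.sqrt ((∑ i : Fin n, (hdeg E i : ℝ) ^ 2) / n) := by
    rw [Real.le_sqrt (by positivity) (by positivity)]
    rw [div_pow, div_le_div_iff₀ (by positivity) hn0]
    calc (∑ i : Fin n, (hdeg E i : ℝ)) ^ 2 * n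
        ≤ (n * ∑ i : Fin n, (hdeg E i : ℝ) ^ 2) * n :=
          mul_le_mul_of_nonneg_right hCS (le_of_lt hn0)
      _ = (∑ i : Fin n, (hdeg E i : ℝ) ^ 2) * (n:ℝ)^2 := by ring
  have h2 : Real.sqrt ((∑ i : Fin n, (hdeg E i : ℝ) ^ 2) / n) ≤
      2 * Real.sqrt ((∑ i : Fin n, (hdeg E i : ℝ) ^ 2) / n) := by
    have := Real.sqrt_nonneg ((∑ i : Fin n, (hdeg E i : ℝ) ^ 2) / n)
    linarith
  linarith
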